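/- For inner functions u and v, the dual compressed shifts D_u and D_v are unitarily equivalent if and only if |u(0)| = |v(0)|. -/

import Mathlib

open MeasureTheory Complex AddCircle

noncomputable section

namespace Paper

/-- The period `2π`. -/
abbrev T : ℝ := 2 * Real.pi

instance : Fact (0 < T) := ⟨by positivity⟩

/-- Normalized Lebesgue (Haar) measure on the circle. -/
abbrev μ : Measure (AddCircle T) := haarAddCircle

/-- The space `L²(𝕋, dm)`. -/
abbrev L2 : Type := Lp ℂ 2 μ

lemma memLp_mul {u : AddCircle T → ℂ} (hm : AEStronglyMeasurable u μ)
    (hb : ∀ᵐ x ∂μ, ‖u x‖ ≤ 1) (f : L2) :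
    MemLp (fun x => u x * (f : AddCircle T → ℂ) x) 2 μ := by
  refine (Lp.memLp f).of_le (hm.mul (Lp.aestronglyMeasurable f)) ?_
  filter_upwards [hb] with x hx
  calc ‖u x * (f : AddCircle T → ℂ) x‖ = ‖u x‖ * ‖(f : AddCircle T → ℂ) x‖ := norm_mul _ _
    _ ≤ 1 * ‖(f : AddCircle T → ℂ) x‖ := by gcongr
    _ = ‖(f : AddCircle T → ℂ) x‖ := one_mul _

/-- Multiplication by a measurable function bounded by `1`, as a bounded operator on `L²`. -/
def mulCLM (u : AddCircle T → ℂ) (hm : AEStronglyMeasurable u μ)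
    (hb : ∀ᵐ x ∂μ, ‖u x‖ ≤ 1) : L2 →L[ℂ] L2 :=
  LinearMap.mkContinuous
    { toFun := fun f => (memLp_mul hm hb f).toLp _
      map_add' := fun f g => by
        show MemLp.toLp _ (memLp_mul hm hb (f + g)) = _
        have h : (fun x => u x * ((f + g : L2) : AddCircle T → ℂ) x)
            =ᵐ[μ] (fun x => u x * (f : AddCircle T → ℂ) x)
              + (fun x => u x * (g : AddCircle T → ℂ) x) := by
          filter_upwards [Lp.coeFn_add f g] with x hx
          simp only [Pi.add_apply, hx, mul_add]
        rw [MemLp.toLp_congr (memLp_mul hm hb (f + g))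
          ((memLp_mul hm hb f).add (memLp_mul hm hb g)) h, MemLp.toLp_add]
      map_smul' := fun c f => by
        have h : (fun x => u x * ((c • f : L2) : AddCircle T → ℂ) x)
            =ᵐ[μ] c • (fun x => u x * (f : AddCircle T → ℂ) x) := by
          filter_upwards [Lp.coeFn_smul c f] with x hx
          simp only [Pi.smul_apply, hx, smul_eq_mul]
          ring
        simp only [RingHom.id_apply]
        rw [MemLp.toLp_congr (memLp_mul hm hb (c • f))
          ((memLp_mul hm hb f).const_smul c) h, MemLp.toLp_const_smul] }
    1
    (fun f => by
      simp only [LinearMap.coe_mk, AddHom.coe_mk, one_mul]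
      rw [Lp.norm_toLp]
      have h1 : eLpNorm (fun x => u x * (f : AddCircle T → ℂ) x) 2 μ
          ≤ eLpNorm (f : AddCircle T → ℂ) 2 μ := by
        refine eLpNorm_mono_ae ?_
        filter_upwards [hb] with x hx
        calc ‖u x * (f : AddCircle T → ℂ) x‖
            = ‖u x‖ * ‖(f : AddCircle T → ℂ) x‖ := norm_mul _ _
          _ ≤ 1 * ‖(f : AddCircle T → ℂ) x‖ := by gcongr
          _ = ‖(f : AddCircle T → ℂ) x‖ := one_mul _
      calc (eLpNorm (fun x => u x * (f : AddCircle T → ℂ) x) 2 μ).toReal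
          ≤ (eLpNorm (f : AddCircle T → ℂ) 2 μ).toReal :=
            ENNReal.toReal_mono (Lp.eLpNorm_ne_top f) h1
        _ = ‖f‖ := (Lp.norm_def f).symm)

lemma memLp_conj (f : L2) :
    MemLp (fun x => (starRingEnd ℂ) ((f : AddCircle T → ℂ) x)) 2 μ := by
  refine (Lp.memLp f).of_le ?_ ?_
  · exact Complex.continuous_conj.comp_aestronglyMeasurable (Lp.aestronglyMeasurable f)
  · filter_upwards with x
    simp

/-- Complex conjugation on `L²`. -/
def conjL2 (f : L2) : L2 := (memLp_conj f).toLp _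

/-- The independent variable `z = e^{iθ}` as a function on the circle. -/
def zfun : AddCircle T → ℂ := fun x => fourier 1 x

lemma zfun_meas : AEStronglyMeasurable zfun μ :=
  ((map_continuous (fourier (T := T) 1)).aestronglyMeasurable)

lemma zfun_norm : ∀ᵐ x ∂μ, ‖zfun x‖ ≤ 1 := by
  filter_upwards with x
  simp [zfun, Circle.norm_coe]

/-- Multiplication by `z` (the bilateral shift `M` on `L²`). -/
def Mz : L2 →L[ℂ] L2 := mulCLM zfun zfun_meas zfun_norm

/-- Multiplication by `conj z`. -/
def Mzbar : L2 →L[ℂ] L2 :=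
  mulCLM (fun x => (starRingEnd ℂ) (zfun x))
    (Complex.continuous_conj.comp_aestronglyMeasurable zfun_meas)
    (by filter_upwards with x; simp [zfun, Circle.norm_coe])

/-- The Hardy space `H² = {f ∈ L² : f̂(n) = 0 for all n < 0}`. -/
def H2 : Submodule ℂ L2 where
  carrier := {f | ∀ n : ℤ, n < 0 → fourierBasis.repr f n = 0}
  add_mem' := by
    intro f g hf hg n hn
    simp [map_add, hf n hn, hg n hn]
  zero_mem' := by intro n hn; simp
  smul_mem' := by
    intro c f hf n hn
    simp [_root_.map_smul, hf n hn]

lemma continuous_coeff (n : ℤ) :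
    Continuous fun f : L2 => fourierBasis.repr f n := by
  rw [Metric.continuous_iff]
  intro f ε hε
  refine ⟨ε, hε, fun g hg => ?_⟩
  have h1 : fourierBasis.repr g n - fourierBasis.repr f n = fourierBasis.repr (g - f) n := by
    simp [map_sub]
  have h2 : ‖fourierBasis.repr (g - f) n‖ ≤ ‖fourierBasis.repr (g - f)‖ :=
    lp.norm_apply_le_norm (by norm_num) _ n
  have h3 : ‖fourierBasis.repr (g - f)‖ = ‖g - f‖ :=
    fourierBasis.repr.norm_map _
  calc dist (fourierBasis.repr g n) (fourierBasis.repr f n)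
      = ‖fourierBasis.repr (g - f) n‖ := by rw [dist_eq_norm, h1]
    _ ≤ ‖g - f‖ := by rw [← h3]; exact h2
    _ = dist g f := (dist_eq_norm g f).symm
    _ < ε := hg

lemma H2_isClosed : IsClosed (H2 : Set L2) := by
  have : (H2 : Set L2) =
      ⋂ n ∈ {m : ℤ | m < 0}, {f : L2 | fourierBasis.repr f n = 0} := by
    ext f
    simp only [Set.mem_iInter, Set.mem_setOf_eq]
    rfl
  rw [this]
  exact isClosed_biInter fun n _ => isClosed_eq (continuous_coeff n) continuous_const

instance : CompleteSpace H2 := H2_isClosed.completeSpace_coe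

/-- The Riesz projection `P⁺` of `L²` onto `H²`. -/
def Pp : L2 →L[ℂ] L2 := H2.subtypeL ∘L H2.orthogonalProjectionOnto

/-- The projection `P⁻ = I − P⁺` of `L²` onto `conj(H²₀)`. -/
def Pm : L2 →L[ℂ] L2 := ContinuousLinearMap.id ℂ L2 - Pp

/-- `conj(H²₀) = {f ∈ L² : f̂(n) = 0 for all n ≥ 0}`, the orthogonal complement of `H²`. -/
def Hm : Submodule ℂ L2 where
  carrier := {f | ∀ n : ℤ, 0 ≤ n → fourierBasis.repr f n = 0}
  add_mem' := by
    intro f g hf hg n hn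
    simp [map_add, hf n hn, hg n hn]
  zero_mem' := by intro n hn; simp
  smul_mem' := by
    intro c f hf n hn
    simp [_root_.map_smul, hf n hn]

/-- The constant function `1` as an element of `L²`. -/
def oneL2 : L2 := (memLp_const (1 : ℂ)).toLp _

/-- An inner function: a bounded measurable unimodular function on the circle whose
negative Fourier coefficients vanish. -/
structure InnerData where
  u : AddCircle T → ℂ
  meas : AEStronglyMeasurable u μ
  unim : ∀ᵐ x ∂μ, ‖u x‖ = 1
  anal : ∀ n : ℤ, n < 0 → fourierCoeff u n = 0

namespace InnerData

variable (U : InnerData)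

lemma bd : ∀ᵐ x ∂μ, ‖U.u x‖ ≤ 1 := by
  filter_upwards [U.unim] with x hx
  rw [hx]

/-- Multiplication by `u`: the operator `M_u` on `L²`. -/
def M : L2 →L[ℂ] L2 := mulCLM U.u U.meas U.bd

/-- Multiplication by `conj u`: the operator `M_{conj u}` on `L²`. -/
def Mc : L2 →L[ℂ] L2 :=
  mulCLM (fun x => (starRingEnd ℂ) (U.u x))
    (Complex.continuous_conj.comp_aestronglyMeasurable U.meas)
    (by filter_upwards [U.bd] with x hx; simpa using hx)

/-- `u` as an element of `L²`. -/
def toL2 : L2 :=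
  (memLp_top_of_bound U.meas 1 U.bd |>.mono_exponent le_top).toLp _

/-- The value `u(0)` of (the analytic extension of) `u` at the origin, i.e. the mean of `u`. -/
def a0 : ℂ := fourierCoeff U.u 0

/-- The subspace `uH²`. -/
def uH2 : Submodule ℂ L2 := Submodule.map (U.M : L2 →ₗ[ℂ] L2) H2

/-- The model space `K_u = H² ∩ (uH²)ᗮ`. -/
def Ku : Submodule ℂ L2 := H2 ⊓ (U.uH2)ᗮ

lemma Ku_isClosed : IsClosed (U.Ku : Set L2) := by
  have : (U.Ku : Set L2) = (H2 : Set L2) ∩ ((U.uH2)ᗮ : Set L2) := rfl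
  rw [this]
  exact H2_isClosed.inter (U.uH2).isClosed_orthogonal

instance : CompleteSpace U.Ku := U.Ku_isClosed.completeSpace_coe

/-- `K_u^⊥`, the orthogonal complement of the model space in `L²`. -/
def KP : Submodule ℂ L2 := (U.Ku)ᗮ

instance : CompleteSpace U.KP := (U.Ku).isClosed_orthogonal.completeSpace_coe

/-- The orthogonal projection `P_u : L² → K_u` (viewed as an operator on `L²`). -/
def Pu : L2 →L[ℂ] L2 := (U.Ku).subtypeL ∘L (U.Ku).orthogonalProjectionOnto

/-- The dual of the compressed shift: `D_u = (I − P_u) M_z |_{K_u^⊥}`. -/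
def Du : U.KP →L[ℂ] U.KP :=
  (U.KP).orthogonalProjectionOnto ∘L Mz ∘L (U.KP).subtypeL

/-- The conjugation `C_u f = u · conj(z f)` on `L²`. -/
def C (f : L2) : L2 := U.M (conjL2 (Mz f))

/-- The reproducing kernel of `K_u` at `0`: `k₀ᵘ = 1 − conj(u(0))·u`. -/
def k0 : L2 := oneL2 - (starRingEnd ℂ) U.a0 • U.toL2

/-- The similarity `V_u = P⁻ + (conj u/conj u(0)) P⁺` of the paper. -/
def V : L2 →L[ℂ] L2 := Pm + ((starRingEnd ℂ) U.a0)⁻¹ • (U.Mc ∘L Pp)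

/-- The inverse similarity `V_u⁻¹ = P⁻ + conj(u(0)) u P⁺`. -/
def Vinv : L2 →L[ℂ] L2 := Pm + (starRingEnd ℂ) U.a0 • (U.M ∘L Pp)

end InnerData

lemma Mz_mem_H2 {f : L2} (hf : f ∈ H2) : Mz f ∈ H2 := by
  intro n hn
  rw [fourierBasis_repr]
  have hcoe : (Mz f : AddCircle T → ℂ) =ᵐ[μ] fun x => zfun x * (f : AddCircle T → ℂ) x :=
    MemLp.coeFn_toLp (memLp_mul zfun_meas zfun_norm f)
  have h1 : fourierCoeff (Mz f : AddCircle T → ℂ) n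
      = fourierCoeff (f : AddCircle T → ℂ) (n - 1) := by
    unfold fourierCoeff
    rw [integral_congr_ae (by filter_upwards [hcoe] with x hx; rw [hx])]
    refine integral_congr_ae ?_
    filter_upwards with x
    have : fourier (-n) x * zfun x = fourier (-(n - 1)) x := by
      unfold zfun
      rw [show (-(n - 1) : ℤ) = -n + 1 by ring, fourier_add]
    simp only [smul_eq_mul]
    calc fourier (-n) x * (zfun x * (f : AddCircle T → ℂ) x)
        = (fourier (-n) x * zfun x) * (f : AddCircle T → ℂ) x := by ring
      _ = fourier (-(n - 1)) x * (f : AddCircle T → ℂ) x := by rw [this]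
  rw [h1]
  have := hf (n - 1) (by omega)
  rwa [fourierBasis_repr] at this

/-- The unilateral shift `S` on `H²`. -/
def Shift : H2 →L[ℂ] H2 :=
  (Mz ∘L H2.subtypeL).codRestrict H2 (fun x => Mz_mem_H2 x.2)

section MainProof

open scoped InnerProductSpace


lemma coeFn_mulCLM (u : AddCircle T → ℂ) (hm : AEStronglyMeasurable u μ)
    (hb : ∀ᵐ x ∂μ, ‖u x‖ ≤ 1) (f : L2) :
    (mulCLM u hm hb f : AddCircle T → ℂ) =ᵐ[μ] fun x => u x * (f : AddCircle T → ℂ) x :=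
  MemLp.coeFn_toLp (memLp_mul hm hb f)

lemma fourierCoeff_congr_ae {f g : AddCircle T → ℂ} (h : f =ᵐ[μ] g) (n : ℤ) :
    fourierCoeff f n = fourierCoeff g n :=
  integral_congr_ae (by filter_upwards [h] with x hx; rw [hx])

lemma mem_H2_iff {f : L2} : f ∈ H2 ↔ ∀ n : ℤ, n < 0 → fourierCoeff (f : AddCircle T → ℂ) n = 0 := by
  simp only [H2, Submodule.mem_mk, AddSubmonoid.mem_mk, AddSubsemigroup.mem_mk,
    Set.mem_setOf_eq, fourierBasis_repr]

lemma mem_Hm_iff {f : L2} : f ∈ Hm ↔ ∀ n : ℤ, 0 ≤ n → fourierCoeff (f : AddCircle T → ℂ) n = 0 := by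
  simp only [Hm, Submodule.mem_mk, AddSubmonoid.mem_mk, AddSubsemigroup.mem_mk,
    Set.mem_setOf_eq, fourierBasis_repr]

lemma fourierCoeff_basis (n m : ℤ) :
    fourierCoeff ((fourierBasis (T := T) n : L2) : AddCircle T → ℂ) m
      = if m = n then 1 else 0 := by
  rw [← fourierBasis_repr, fourierBasis.repr_self]
  classical
  rw [lp.single_apply]
  by_cases h : m = n <;> simp [h, Pi.single_apply]

lemma basis_mem_H2 {n : ℤ} (hn : 0 ≤ n) : (fourierBasis (T := T) n : L2) ∈ H2 := by
  rw [mem_H2_iff]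
  intro m hm
  rw [fourierCoeff_basis]
  simp only [if_neg (by omega : ¬ m = n)]

lemma basis_mem_Hm {n : ℤ} (hn : n < 0) : (fourierBasis (T := T) n : L2) ∈ Hm := by
  rw [mem_Hm_iff]
  intro m hm
  rw [fourierCoeff_basis]
  simp only [if_neg (by omega : ¬ m = n)]

lemma Hm_isClosed : IsClosed (Hm : Set L2) := by
  have : (Hm : Set L2) =
      ⋂ n ∈ {m : ℤ | 0 ≤ m}, {f : L2 | fourierBasis.repr f n = 0} := by
    ext f
    simp only [Set.mem_iInter, Set.mem_setOf_eq]
    rfl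
  rw [this]
  exact isClosed_biInter fun n _ => isClosed_eq (continuous_coeff n) continuous_const

instance : CompleteSpace Hm := Hm_isClosed.completeSpace_coe

/-- Density principle for `H2`. -/
lemma H2_le_of_basis {S : Submodule ℂ L2} (hS : IsClosed (S : Set L2))
    (h : ∀ n : ℤ, 0 ≤ n → (fourierBasis (T := T) n : L2) ∈ S) : H2 ≤ S := by
  intro f hf
  have hsum := fourierBasis.hasSum_repr f
  have : ∀ s : Finset ℤ, (∑ i ∈ s, fourierBasis.repr f i • fourierBasis i) ∈ S := by
    intro s
    refine Submodule.sum_mem S fun i _ => ?_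
    by_cases hi : 0 ≤ i
    · exact Submodule.smul_mem S _ (h i hi)
    · rw [hf i (by omega)]
      simp
  have := mem_closure_of_tendsto hsum (Filter.Eventually.of_forall this)
  rwa [hS.closure_eq] at this

lemma Hm_le_of_basis {S : Submodule ℂ L2} (hS : IsClosed (S : Set L2))
    (h : ∀ n : ℤ, n < 0 → (fourierBasis (T := T) n : L2) ∈ S) : Hm ≤ S := by
  intro f hf
  have hsum := fourierBasis.hasSum_repr f
  have : ∀ s : Finset ℤ, (∑ i ∈ s, fourierBasis.repr f i • fourierBasis i) ∈ S := by
    intro s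
    refine Submodule.sum_mem S fun i _ => ?_
    by_cases hi : i < 0
    · exact Submodule.smul_mem S _ (h i hi)
    · rw [hf i (by omega)]
      simp
  have := mem_closure_of_tendsto hsum (Filter.Eventually.of_forall this)
  rwa [hS.closure_eq] at this

lemma Hm_eq_orthogonal : Hm = H2ᗮ := by
  apply le_antisymm
  · intro x hx
    rw [Submodule.mem_orthogonal]
    have hle : H2 ≤ LinearMap.ker ((innerSL ℂ x : L2 →L[ℂ] ℂ) : L2 →ₗ[ℂ] ℂ) := by
      refine H2_le_of_basis ?_ ?_
      · exact ContinuousLinearMap.isClosed_ker (innerSL ℂ x : L2 →L[ℂ] ℂ)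
      · intro n hn
        rw [LinearMap.mem_ker]
        show ⟪x, (fourierBasis n : L2)⟫_ℂ = 0
        have hz : ⟪(fourierBasis (T := T) n : L2), x⟫_ℂ = 0 := by
          rw [← fourierBasis.repr_apply_apply, fourierBasis_repr]
          exact mem_Hm_iff.mp hx n hn
        rw [← inner_conj_symm]
        show (starRingEnd ℂ) ⟪(fourierBasis (T := T) n : L2), x⟫_ℂ = 0
        rw [hz, map_zero]
    intro v hv
    have h0 : ⟪x, v⟫_ℂ = 0 := hle hv
    rw [← inner_conj_symm, h0, map_zero]
  · intro x hx
    rw [mem_Hm_iff]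
    intro n hn
    rw [← fourierBasis_repr, fourierBasis.repr_apply_apply]
    exact (Submodule.mem_orthogonal H2 x).mp hx _ (basis_mem_H2 hn)

lemma coeFn_basis (n : ℤ) :
    ((fourierBasis (T := T) n : L2) : AddCircle T → ℂ) =ᵐ[μ] fourier n := by
  rw [coe_fourierBasis]
  exact coeFn_fourierLp 2 n

lemma coeFn_Mz (f : L2) : (Mz f : AddCircle T → ℂ) =ᵐ[μ] fun x => zfun x * (f : AddCircle T → ℂ) x :=
  coeFn_mulCLM _ _ _ f

lemma fourierCoeff_mulCLM_basis (u : AddCircle T → ℂ) (hm : AEStronglyMeasurable u μ)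
    (hb : ∀ᵐ x ∂μ, ‖u x‖ ≤ 1) (n m : ℤ) :
    fourierCoeff ((mulCLM u hm hb (fourierBasis n)) : AddCircle T → ℂ) m
      = fourierCoeff u (m - n) := by
  have h1 : ((mulCLM u hm hb (fourierBasis n)) : AddCircle T → ℂ)
      =ᵐ[μ] fun x => u x * fourier n x := by
    filter_upwards [coeFn_mulCLM u hm hb (fourierBasis n), coeFn_basis n] with x hx hy
    rw [hx, hy]
  rw [fourierCoeff_congr_ae h1]
  unfold fourierCoeff
  refine integral_congr_ae (Filter.Eventually.of_forall fun x => ?_)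
  have : fourier (-m) x * fourier n x = fourier (-(m - n)) x := by
    rw [show (-(m - n) : ℤ) = -m + n by ring, fourier_add]
  simp only [smul_eq_mul]
  calc fourier (-m) x * (u x * fourier n x)
      = (fourier (-m) x * fourier n x) * u x := by ring
    _ = fourier (-(m - n)) x * u x := by rw [this]

namespace InnerData

variable (U : InnerData)

lemma coeFn_M (f : L2) : (U.M f : AddCircle T → ℂ) =ᵐ[μ] fun x => U.u x * (f : AddCircle T → ℂ) x :=
  coeFn_mulCLM _ _ _ f

lemma coeFn_Mc (f : L2) :
    (U.Mc f : AddCircle T → ℂ) =ᵐ[μ] fun x => (starRingEnd ℂ) (U.u x) * (f : AddCircle T → ℂ) x :=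
  coeFn_mulCLM _ _ _ f

lemma Mc_M (f : L2) : U.Mc (U.M f) = f := by
  refine Lp.ext ?_
  filter_upwards [U.coeFn_Mc (U.M f), U.coeFn_M f, U.unim] with x h1 h2 h3
  rw [h1, h2, ← mul_assoc]
  have : (starRingEnd ℂ) (U.u x) * U.u x = 1 := by
    rw [mul_comm, Complex.mul_conj]
    norm_cast
    rw [Complex.normSq_eq_norm_sq, h3]
    norm_num
  rw [this, one_mul]

lemma M_Mc (f : L2) : U.M (U.Mc f) = f := by
  refine Lp.ext ?_
  filter_upwards [U.coeFn_M (U.Mc f), U.coeFn_Mc f, U.unim] with x h1 h2 h3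
  rw [h1, h2, ← mul_assoc]
  have : U.u x * (starRingEnd ℂ) (U.u x) = 1 := by
    rw [Complex.mul_conj]
    norm_cast
    rw [Complex.normSq_eq_norm_sq, h3]
    norm_num
  rw [this, one_mul]

lemma norm_M (f : L2) : ‖U.M f‖ = ‖f‖ := by
  rw [Lp.norm_def, Lp.norm_def]
  congr 1
  refine eLpNorm_congr_norm_ae ?_
  filter_upwards [U.coeFn_M f, U.unim] with x h1 h2
  rw [h1, norm_mul, h2, one_mul]

lemma M_comm_Mz (f : L2) : U.M (Mz f) = Mz (U.M f) := by
  refine Lp.ext ?_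
  filter_upwards [U.coeFn_M (Mz f), coeFn_Mz f,
    coeFn_Mz (U.M f), U.coeFn_M f] with x h1 h2 h3 h4
  rw [h1, h2, h3, h4]
  ring

lemma inner_M_left (f g : L2) : ⟪U.M f, g⟫_ℂ = ⟪f, U.Mc g⟫_ℂ := by
  rw [MeasureTheory.L2.inner_def, MeasureTheory.L2.inner_def]
  refine integral_congr_ae ?_
  filter_upwards [U.coeFn_M f, U.coeFn_Mc g] with x h1 h2
  simp only [RCLike.inner_apply]
  rw [h1, h2]
  simp only [map_mul]
  ring

/-- `uH²` is contained in `H²`. -/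
lemma uH2_le_H2 : U.uH2 ≤ H2 := by
  have : H2 ≤ H2.comap (U.M : L2 →ₗ[ℂ] L2) := by
    refine H2_le_of_basis ?_ ?_
    · exact IsClosed.preimage (U.M.continuous) H2_isClosed
    · intro n hn
      rw [Submodule.mem_comap]
      show U.M (fourierBasis n) ∈ H2
      rw [mem_H2_iff]
      intro m hm
      rw [show (U.M (fourierBasis n)) = mulCLM U.u U.meas U.bd (fourierBasis n) from rfl,
        fourierCoeff_mulCLM_basis]
      exact U.anal (m - n) (by omega)
  intro x hx
  obtain ⟨y, hy, rfl⟩ := hx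
  exact this hy

end InnerData
lemma coeFn_oneL2 : ((oneL2 : L2) : AddCircle T → ℂ) =ᵐ[μ] fun _ => (1 : ℂ) :=
  MemLp.coeFn_toLp _

lemma oneL2_eq_basis : oneL2 = (fourierBasis (T := T) 0 : L2) := by
  refine Lp.ext ?_
  filter_upwards [coeFn_oneL2, coeFn_basis 0] with x h1 h2
  rw [h1, h2, fourier_zero]

lemma fourierCoeff_oneL2 (m : ℤ) :
    fourierCoeff ((oneL2 : L2) : AddCircle T → ℂ) m = if m = 0 then 1 else 0 := by
  rw [oneL2_eq_basis, fourierCoeff_basis]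

lemma oneL2_mem_H2 : oneL2 ∈ H2 := by
  rw [oneL2_eq_basis]
  exact basis_mem_H2 le_rfl

lemma norm_oneL2 : ‖oneL2‖ = 1 := by
  rw [oneL2_eq_basis]
  exact fourierBasis.orthonormal.1 0

lemma inner_oneL2_left (g : L2) : ⟪oneL2, g⟫_ℂ = fourierCoeff (g : AddCircle T → ℂ) 0 := by
  rw [oneL2_eq_basis, ← fourierBasis_repr, ← fourierBasis.repr_apply_apply]

namespace InnerData

variable (U : InnerData)

lemma coeFn_toL2 : ((U.toL2 : L2) : AddCircle T → ℂ) =ᵐ[μ] U.u :=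
  MemLp.coeFn_toLp _

lemma toL2_eq_M_one : U.toL2 = U.M oneL2 := by
  refine Lp.ext ?_
  filter_upwards [U.coeFn_toL2, U.coeFn_M oneL2, coeFn_oneL2] with x h1 h2 h3
  rw [h1, h2, h3, mul_one]

lemma fourierCoeff_toL2 (m : ℤ) :
    fourierCoeff ((U.toL2 : L2) : AddCircle T → ℂ) m = fourierCoeff U.u m :=
  fourierCoeff_congr_ae U.coeFn_toL2 m

lemma toL2_mem_H2 : U.toL2 ∈ H2 := by
  rw [mem_H2_iff]
  intro n hn
  rw [U.fourierCoeff_toL2]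
  exact U.anal n hn

lemma norm_toL2 : ‖U.toL2‖ = 1 := by
  rw [U.toL2_eq_M_one, U.norm_M, norm_oneL2]

/-- The isometry `M_u` as a `LinearIsometry`. -/
def Miso : L2 →ₗᵢ[ℂ] L2 := ⟨(U.M : L2 →ₗ[ℂ] L2), U.norm_M⟩

lemma uH2_isClosed : IsClosed (U.uH2 : Set L2) := by
  have h1 : (U.uH2 : Set L2) = (U.M : L2 → L2) '' (H2 : Set L2) := by
    ext x
    simp only [uH2, Submodule.map_coe, ContinuousLinearMap.coe_coe]
  rw [h1]
  exact (U.Miso.isometry.isClosedEmbedding.isClosedMap) _ H2_isClosed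

instance : CompleteSpace U.uH2 := U.uH2_isClosed.completeSpace_coe

lemma Hm_le_KP : Hm ≤ U.KP := by
  rw [Hm_eq_orthogonal]
  exact Submodule.orthogonal_le inf_le_left

lemma uH2_le_KP : U.uH2 ≤ U.KP :=
  le_trans (Submodule.le_orthogonal_orthogonal _) (Submodule.orthogonal_le inf_le_right)

lemma M_mem_KP {h : L2} (hh : h ∈ H2) : U.M h ∈ U.KP :=
  U.uH2_le_KP ⟨h, hh, rfl⟩

lemma M_mem_uH2 {h : L2} (hh : h ∈ H2) : U.M h ∈ U.uH2 := ⟨h, hh, rfl⟩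

lemma inner_k0_M_basis (n : ℤ) (hn : 0 ≤ n) : ⟪U.k0, U.M (fourierBasis n)⟫_ℂ = 0 := by
  have e1 : ⟪oneL2, U.M (fourierBasis n)⟫_ℂ = fourierCoeff U.u (0 - n) := by
    rw [inner_oneL2_left]
    exact fourierCoeff_mulCLM_basis U.u U.meas U.bd n 0
  have e2 : ⟪U.toL2, U.M (fourierBasis n)⟫_ℂ = if (0:ℤ) = n then 1 else 0 := by
    rw [U.toL2_eq_M_one, U.inner_M_left, U.Mc_M, inner_oneL2_left, fourierCoeff_basis]
  rw [k0, inner_sub_left, inner_smul_left, e1, e2]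
  rcases eq_or_lt_of_le hn with h | h
  · subst h
    simp only [if_pos rfl, if_true, eq_self_iff_true, sub_zero, mul_one, RingHom.id_apply,
      starRingEnd_self_apply]
    exact sub_self U.a0
  · rw [U.anal (0 - n) (by omega), if_neg (by omega)]
    simp

lemma k0_mem_Ku : U.k0 ∈ U.Ku := by
  refine Submodule.mem_inf.mpr ⟨?_, ?_⟩
  · exact Submodule.sub_mem _ oneL2_mem_H2 (Submodule.smul_mem _ _ U.toL2_mem_H2)
  · rw [Submodule.mem_orthogonal]
    intro w hw
    obtain ⟨h, hh, rfl⟩ := hw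
    have hle : H2 ≤ LinearMap.ker (((innerSL ℂ U.k0).comp U.M : L2 →L[ℂ] ℂ) : L2 →ₗ[ℂ] ℂ) := by
      refine H2_le_of_basis ?_ ?_
      · exact ContinuousLinearMap.isClosed_ker _
      · intro n hn
        rw [LinearMap.mem_ker]
        exact U.inner_k0_M_basis n hn
    have h0 : ⟪U.k0, U.M h⟫_ℂ = 0 := hle hh
    show ⟪U.M h, U.k0⟫_ℂ = 0
    rw [← inner_conj_symm, h0, map_zero]

lemma k0_mem_KPperp : U.k0 ∈ (U.KP)ᗮ :=
  Submodule.le_orthogonal_orthogonal U.Ku U.k0_mem_Ku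

lemma one_eq_k0_add : oneL2 = U.k0 + (starRingEnd ℂ) U.a0 • U.toL2 := by
  rw [k0]; abel

/-- Projection of `1` onto `K_u^⊥`. -/
lemma proj_one : ((U.KP).orthogonalProjectionOnto oneL2 : L2) = (starRingEnd ℂ) U.a0 • U.toL2 := by
  conv_lhs => rw [U.one_eq_k0_add]
  rw [map_add, Submodule.orthogonalProjectionOnto_apply_of_mem_orthogonal U.k0_mem_KPperp]
  have hmem : (starRingEnd ℂ) U.a0 • U.toL2 ∈ U.KP := by
    refine Submodule.smul_mem _ _ ?_
    rw [U.toL2_eq_M_one]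
    exact U.M_mem_KP oneL2_mem_H2
  rw [zero_add]
  exact Submodule.starProjection_eq_self_iff.mpr hmem

/-- Decomposition of elements of `K_u^⊥`. -/
lemma exists_dec {x : L2} (hx : x ∈ U.KP) :
    ∃ g h : L2, g ∈ Hm ∧ h ∈ H2 ∧ x = g + U.M h := by
  have hdec : (H2.orthogonalProjectionOnto x : L2) + ((H2ᗮ).orthogonalProjectionOnto x : L2) = x :=
    Submodule.starProjection_add_starProjection_orthogonal (K := H2) x
  set y := ((H2).orthogonalProjectionOnto x : L2) with hy
  set g := ((H2ᗮ).orthogonalProjectionOnto x : L2) with hg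
  have hgHm : g ∈ Hm := by rw [Hm_eq_orthogonal]; exact Submodule.coe_mem _
  have hyKP : y ∈ U.KP := by
    have : y = x - g := by rw [← hdec]; abel
    rw [this]
    exact Submodule.sub_mem _ hx (U.Hm_le_KP hgHm)
  -- y ∈ H2 ∩ KP implies y ∈ uH2
  have hyH2 : y ∈ H2 := Submodule.coe_mem _
  have hyu : y ∈ U.uH2 := by
    have hdec2 : ((U.uH2).orthogonalProjectionOnto y : L2) + ((U.uH2ᗮ).orthogonalProjectionOnto y : L2) = y :=
      Submodule.starProjection_add_starProjection_orthogonal (K := U.uH2) y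
    set p := ((U.uH2).orthogonalProjectionOnto y : L2) with hp
    set w := ((U.uH2ᗮ).orthogonalProjectionOnto y : L2) with hw
    have hwKu : w ∈ U.Ku := by
      constructor
      · have : w = y - p := by rw [← hdec2]; abel
        rw [this]
        exact Submodule.sub_mem _ hyH2 (U.uH2_le_H2 (Submodule.coe_mem _))
      · exact Submodule.coe_mem _
    have hwKP : w ∈ U.KP := by
      have : w = y - p := by rw [← hdec2]; abel
      rw [this]
      exact Submodule.sub_mem _ hyKP (U.uH2_le_KP (Submodule.coe_mem _))
    have hw0 : w = 0 := by
      have := (Submodule.mem_orthogonal U.Ku w).mp hwKP w hwKu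
      exact inner_self_eq_zero.mp this
    have : y = p := by rw [← hdec2, hw0, add_zero]
    rw [this]
    exact Submodule.coe_mem _
  obtain ⟨h, hh, hyh⟩ := hyu
  have hyh' : U.M h = y := hyh
  exact ⟨g, h, hgHm, hh, by rw [← hdec, ← hyh']; abel⟩

end InnerData
lemma fourierCoeff_Mz (f : L2) (n : ℤ) :
    fourierCoeff ((Mz f : L2) : AddCircle T → ℂ) n
      = fourierCoeff (f : AddCircle T → ℂ) (n - 1) := by
  unfold fourierCoeff
  rw [integral_congr_ae (by filter_upwards [coeFn_Mz f] with x hx; rw [hx] :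
    (fun x => fourier (-n) x • (Mz f : AddCircle T → ℂ) x)
      =ᵐ[μ] fun x => fourier (-n) x • (zfun x * (f : AddCircle T → ℂ) x))]
  refine integral_congr_ae (Filter.Eventually.of_forall fun x => ?_)
  have : fourier (-n) x * zfun x = fourier (-(n - 1)) x := by
    unfold zfun
    rw [show (-(n - 1) : ℤ) = -n + 1 by ring, fourier_add]
  simp only [smul_eq_mul]
  calc fourier (-n) x * (zfun x * (f : AddCircle T → ℂ) x)
      = (fourier (-n) x * zfun x) * (f : AddCircle T → ℂ) x := by ring
    _ = fourier (-(n - 1)) x * (f : AddCircle T → ℂ) x := by rw [this]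

lemma repr_Mz (f : L2) (n : ℤ) :
    fourierBasis.repr (Mz f) n = fourierBasis.repr f (n - 1) := by
  rw [fourierBasis_repr, fourierBasis_repr]
  exact fourierCoeff_Mz f n

lemma repr_oneL2 (n : ℤ) : fourierBasis.repr oneL2 n = if n = 0 then 1 else 0 := by
  rw [fourierBasis_repr]
  exact fourierCoeff_oneL2 n

lemma norm_Mz (f : L2) : ‖Mz f‖ = ‖f‖ := by
  rw [Lp.norm_def, Lp.norm_def]
  congr 1
  refine eLpNorm_congr_norm_ae ?_
  filter_upwards [coeFn_Mz f] with x h1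
  rw [h1, norm_mul]
  have : ‖zfun x‖ = 1 := by simp [zfun, Circle.norm_coe]
  rw [this, one_mul]

lemma Mz_basis_neg_one : Mz (fourierBasis (T := T) (-1) : L2) = oneL2 := by
  refine Lp.ext ?_
  filter_upwards [coeFn_Mz (fourierBasis (-1)), coeFn_basis (-1), coeFn_oneL2] with x h1 h2 h3
  rw [h1, h2, h3]
  unfold zfun
  rw [← fourier_add]
  norm_num

lemma TT_mem_Hm {g : L2} (hg : g ∈ Hm) :
    Mz g - fourierBasis.repr g (-1) • oneL2 ∈ Hm := by
  intro n hn
  rw [map_sub, _root_.map_smul]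
  rw [lp.coeFn_sub, Pi.sub_apply, lp.coeFn_smul, Pi.smul_apply, repr_Mz, repr_oneL2]
  rcases eq_or_lt_of_le hn with h | h
  · rw [← h]
    simp
  · rw [hg (n - 1) (by omega), if_neg (by omega)]
    simp

lemma inner_Hm_H2 {g f : L2} (hg : g ∈ Hm) (hf : f ∈ H2) : ⟪g, f⟫_ℂ = 0 := by
  rw [Hm_eq_orthogonal] at hg
  exact (Submodule.mem_orthogonal' H2 g).mp hg f hf

lemma inner_oneL2_Mz {h : L2} (hh : h ∈ H2) : ⟪oneL2, Mz h⟫_ℂ = 0 := by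
  rw [inner_oneL2_left, fourierCoeff_Mz]
  have := hh (-1) (by norm_num)
  rwa [fourierBasis_repr] at this

namespace InnerData

variable (U : InnerData)

lemma Du_val (x : U.KP) :
    ((U.Du x : U.KP) : L2) = ((U.KP).orthogonalProjectionOnto (Mz (x : L2)) : L2) := rfl

lemma Du_apply_val {g h : L2} (hg : g ∈ Hm) (hh : h ∈ H2)
    (x : U.KP) (hx : (x : L2) = g + U.M h) :
    ((U.Du x : U.KP) : L2)
      = (Mz g - fourierBasis.repr g (-1) • oneL2)
        + U.M ((fourierBasis.repr g (-1) * (starRingEnd ℂ) U.a0) • oneL2 + Mz h) := by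
  set c := fourierBasis.repr g (-1) with hc
  have hMzx : Mz (x : L2) = (Mz g - c • oneL2) + c • oneL2 + U.M (Mz h) := by
    rw [hx, map_add, U.M_comm_Mz h]
    abel
  rw [U.Du_val, hMzx, map_add, map_add]
  have h1 : ((U.KP).orthogonalProjectionOnto (Mz g - c • oneL2) : L2) = Mz g - c • oneL2 :=
    Submodule.starProjection_eq_self_iff.mpr (U.Hm_le_KP (TT_mem_Hm hg))
  have h2 : ((U.KP).orthogonalProjectionOnto (c • oneL2) : L2) = c • ((starRingEnd ℂ) U.a0 • U.toL2) := by
    rw [_root_.map_smul]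
    rw [Submodule.coe_smul]
    rw [U.proj_one]
  have h3 : ((U.KP).orthogonalProjectionOnto (U.M (Mz h)) : L2) = U.M (Mz h) :=
    Submodule.starProjection_eq_self_iff.mpr (U.M_mem_KP (Mz_mem_H2 hh))
  push_cast
  rw [h1, h2, h3]
  rw [map_add, _root_.map_smul, U.toL2_eq_M_one, smul_smul]
  abel

lemma abs_a0_le_one : ‖U.a0‖ ≤ 1 := by
  have h1 : U.a0 = ∫ x, fourier (-0) x • U.u x ∂μ := rfl
  rw [h1]
  have h2 : (∫ x, fourier (-0) x • U.u x ∂μ) = ∫ x, U.u x ∂μ := by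
    refine integral_congr_ae (Filter.Eventually.of_forall fun x => ?_)
    norm_num
  rw [h2]
  calc ‖∫ x, U.u x ∂μ‖ ≤ ∫ x, ‖U.u x‖ ∂μ := norm_integral_le_integral_norm _
    _ = ∫ (_ : AddCircle T), (1 : ℝ) ∂μ := integral_congr_ae U.unim
    _ = 1 := by simp

lemma norm_sq_M_add {g h : L2} (hg : g ∈ Hm) (hh : h ∈ H2) :
    ‖g + U.M h‖ ^ 2 = ‖g‖ ^ 2 + ‖h‖ ^ 2 := by
  rw [sq, sq, sq, norm_add_sq_eq_norm_sq_add_norm_sq_of_inner_eq_zero _ _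
    (inner_Hm_H2 hg (U.uH2_le_H2 (U.M_mem_uH2 hh))), U.norm_M]

lemma norm_sq_add_of_inner_zero {x y : L2} (hxy : ⟪x, y⟫_ℂ = 0) :
    ‖x + y‖ ^ 2 = ‖x‖ ^ 2 + ‖y‖ ^ 2 := by
  rw [sq, sq, sq, norm_add_sq_eq_norm_sq_add_norm_sq_of_inner_eq_zero _ _ hxy]

lemma Du_norm_lower (f : U.KP) : ‖U.a0‖ * ‖f‖ ≤ ‖U.Du f‖ := by
  obtain ⟨g, h, hg, hh, hx⟩ := U.exists_dec f.2
  set c := fourierBasis.repr g (-1) with hc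
  set a := U.a0 with ha
  -- norm of f
  have hnf : ‖f‖ ^ 2 = ‖g‖ ^ 2 + ‖h‖ ^ 2 := by
    rw [show ‖f‖ = ‖(f : L2)‖ from rfl, hx]
    exact U.norm_sq_M_add hg hh
  -- norm of Du f
  set h' : L2 := (c * (starRingEnd ℂ) a) • oneL2 + Mz h with hh'
  have hh'H2 : h' ∈ H2 := Submodule.add_mem _ (Submodule.smul_mem _ _ oneL2_mem_H2) (Mz_mem_H2 hh)
  have hDuval : ((U.Du f : U.KP) : L2) = (Mz g - c • oneL2) + U.M h' :=
    U.Du_apply_val hg hh f hx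
  have hnDu : ‖U.Du f‖ ^ 2 = ‖Mz g - c • oneL2‖ ^ 2 + ‖h'‖ ^ 2 := by
    rw [show ‖U.Du f‖ = ‖((U.Du f : U.KP) : L2)‖ from rfl, hDuval]
    exact U.norm_sq_M_add (TT_mem_Hm hg) hh'H2
  -- compute ‖TTg‖²
  have hTT : ‖Mz g - c • oneL2‖ ^ 2 = ‖g‖ ^ 2 - ‖c‖ ^ 2 := by
    rw [norm_sub_sq (𝕜 := ℂ) (Mz g) (c • oneL2)]
    have hio1 : ⟪Mz g, c • oneL2⟫_ℂ = c * ⟪Mz g, oneL2⟫_ℂ := inner_smul_right _ _ _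
    have hio2 : ⟪Mz g, oneL2⟫_ℂ = (starRingEnd ℂ) c := by
      rw [← inner_conj_symm, inner_oneL2_left, ← fourierBasis_repr, repr_Mz]
      congr 1
    rw [hio1, hio2, norm_Mz, norm_smul, norm_oneL2, mul_one]
    have hre : RCLike.re (c * (starRingEnd ℂ) c) = ‖c‖ ^ 2 := by
      rw [RCLike.mul_conj]
      norm_cast
    rw [hre]
    ring
  -- compute ‖h'‖²
  have hh'n : ‖h'‖ ^ 2 = ‖c‖ ^ 2 * ‖a‖ ^ 2 + ‖h‖ ^ 2 := by
    have hinner : ⟪(c * (starRingEnd ℂ) a) • oneL2, Mz h⟫_ℂ = 0 := by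
      have : ⟪(c * (starRingEnd ℂ) a) • oneL2, Mz h⟫_ℂ
          = (starRingEnd ℂ) (c * (starRingEnd ℂ) a) * ⟪oneL2, Mz h⟫_ℂ := inner_smul_left _ _ _
      rw [this, inner_oneL2_Mz hh, mul_zero]
    rw [hh', norm_sq_add_of_inner_zero hinner, norm_smul, norm_mul, norm_oneL2, mul_one,
      RCLike.norm_conj, norm_Mz]
    ring
  -- conclude
  have hA0 : (0:ℝ) ≤ ‖a‖ := norm_nonneg _
  have hA1 : ‖a‖ ≤ 1 := U.abs_a0_le_one
  have hC0 : (0:ℝ) ≤ ‖c‖ := norm_nonneg _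
  have hcle : ‖c‖ ≤ ‖g‖ := by
    have h2 : ‖fourierBasis.repr g (-1)‖ ≤ ‖fourierBasis.repr g‖ :=
      lp.norm_apply_le_norm (by norm_num) _ (-1)
    rwa [fourierBasis.repr.norm_map] at h2
  have h1 : 0 ≤ 1 - ‖a‖ ^ 2 := by nlinarith
  have h2 : ‖c‖ ^ 2 ≤ ‖g‖ ^ 2 := by nlinarith [norm_nonneg g]
  have hsq : (‖a‖ * ‖f‖) ^ 2 ≤ ‖U.Du f‖ ^ 2 := by
    nlinarith [mul_nonneg h1 (sub_nonneg.mpr h2), mul_nonneg h1 (sq_nonneg ‖h‖)]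
  have hf0 : 0 ≤ ‖a‖ * ‖f‖ := mul_nonneg hA0 (norm_nonneg _)
  calc ‖a‖ * ‖f‖ = Real.sqrt ((‖a‖ * ‖f‖) ^ 2) := (Real.sqrt_sq hf0).symm
    _ ≤ Real.sqrt (‖U.Du f‖ ^ 2) := Real.sqrt_le_sqrt hsq
    _ = ‖U.Du f‖ := Real.sqrt_sq (norm_nonneg _)


lemma Du_attain : ∃ f : U.KP, ‖f‖ = 1 ∧ ‖U.Du f‖ = ‖U.a0‖ := by
  have hmemHm : (fourierBasis (T := T) (-1) : L2) ∈ Hm := basis_mem_Hm (by norm_num)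
  have hmem : (fourierBasis (T := T) (-1) : L2) ∈ U.KP := U.Hm_le_KP hmemHm
  refine ⟨⟨fourierBasis (-1), hmem⟩, ?_, ?_⟩
  · show ‖(fourierBasis (T := T) (-1) : L2)‖ = 1
    exact fourierBasis.orthonormal.1 (-1)
  · have hval := U.Du_apply_val hmemHm (Submodule.zero_mem H2)
      ⟨fourierBasis (-1), hmem⟩ (by simp)
    have hrepr : fourierBasis.repr (fourierBasis (T := T) (-1) : L2) (-1) = 1 := by
      rw [fourierBasis.repr_self]
      classical
      rw [lp.single_apply]
      simp
    show ‖((U.Du ⟨fourierBasis (-1), hmem⟩ : U.KP) : L2)‖ = ‖U.a0‖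
    rw [hval, hrepr, Mz_basis_neg_one, one_smul, sub_self, zero_add, map_zero, add_zero, one_mul,
      _root_.map_smul, ← U.toL2_eq_M_one, norm_smul, RCLike.norm_conj, U.norm_toL2, mul_one]

end InnerData

lemma Pp_apply_add {g h : L2} (hg : g ∈ Hm) (hh : h ∈ H2) : Pp (g + h) = h := by
  have h1 : Pp g = 0 := by
    show H2.subtypeL ((H2).orthogonalProjectionOnto g) = 0
    rw [Submodule.orthogonalProjectionOnto_apply_of_mem_orthogonal
      (Hm_eq_orthogonal ▸ hg), map_zero]
  have h2 : Pp h = h := by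
    show ((H2).orthogonalProjectionOnto h : L2) = h
    exact Submodule.starProjection_eq_self_iff.mpr hh
  rw [map_add, h1, h2, zero_add]

lemma Pm_apply_add {g h : L2} (hg : g ∈ Hm) (hh : h ∈ H2) : Pm (g + h) = g := by
  rw [Pm, ContinuousLinearMap.sub_apply, ContinuousLinearMap.id_apply, Pp_apply_add hg hh]
  abel

lemma Wmap_apply (U V : InnerData) (l : ℂ) {g h : L2} (hg : g ∈ Hm) (hh : h ∈ H2) :
    (Pm + l • ((V.M.comp U.Mc).comp Pp)) (g + U.M h) = g + l • V.M h := by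
  rw [ContinuousLinearMap.add_apply, ContinuousLinearMap.smul_apply,
    ContinuousLinearMap.comp_apply, ContinuousLinearMap.comp_apply,
    Pm_apply_add hg (U.uH2_le_H2 (U.M_mem_uH2 hh)),
    Pp_apply_add hg (U.uH2_le_H2 (U.M_mem_uH2 hh)), U.Mc_M]

lemma norm_eq_of_sq_eq {x y : ℝ} (hx : 0 ≤ x) (hy : 0 ≤ y) (h : x ^ 2 = y ^ 2) : x = y := by
  nlinarith

lemma exists_equiv (U V : InnerData) (hab : ‖U.a0‖ = ‖V.a0‖) :
    ∃ Z : U.KP ≃ₗᵢ[ℂ] V.KP, ∀ f : U.KP, Z (U.Du f) = V.Du (Z f) := by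
  obtain ⟨l, hl1, hl2⟩ : ∃ l : ℂ, ‖l‖ = 1 ∧ l * (starRingEnd ℂ) U.a0 = (starRingEnd ℂ) V.a0 := by
    by_cases h : U.a0 = 0
    · refine ⟨1, by norm_num, ?_⟩
      have hb : V.a0 = 0 := by
        have h2 := hab
        rw [h, norm_zero] at h2
        exact norm_eq_zero.mp h2.symm
      rw [h, hb]
      simp
    · have hne : (starRingEnd ℂ) U.a0 ≠ 0 := fun hc => h (by simpa using congrArg (starRingEnd ℂ) hc)
      refine ⟨(starRingEnd ℂ) V.a0 / (starRingEnd ℂ) U.a0, ?_, div_mul_cancel₀ _ hne⟩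
      have hna : ‖U.a0‖ ≠ 0 := fun hc => h (norm_eq_zero.mp hc)
      rw [norm_div, RCLike.norm_conj, RCLike.norm_conj, ← hab, div_self hna]
  set W : L2 →L[ℂ] L2 := Pm + l • ((V.M.comp U.Mc).comp Pp) with hWdef
  set W' : L2 →L[ℂ] L2 := Pm + (starRingEnd ℂ) l • ((U.M.comp V.Mc).comp Pp) with hW'def
  have hll : (starRingEnd ℂ) l * l = 1 := by
    rw [RCLike.conj_mul, hl1]
    norm_num
  -- membership
  have hWmem : ∀ x : U.KP, W (x : L2) ∈ V.KP := by
    intro x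
    obtain ⟨g, h, hg, hh, hx⟩ := U.exists_dec x.2
    rw [hx, Wmap_apply U V l hg hh, ← _root_.map_smul V.M l h]
    exact Submodule.add_mem _ (V.Hm_le_KP hg) (V.M_mem_KP (Submodule.smul_mem _ _ hh))
  have hW'mem : ∀ y : V.KP, W' (y : L2) ∈ U.KP := by
    intro y
    obtain ⟨g, h, hg, hh, hy⟩ := V.exists_dec y.2
    rw [hy, Wmap_apply V U ((starRingEnd ℂ) l) hg hh, ← _root_.map_smul U.M _ h]
    exact Submodule.add_mem _ (U.Hm_le_KP hg) (U.M_mem_KP (Submodule.smul_mem _ _ hh))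
  -- norm preservation
  have hWnorm : ∀ x : U.KP, ‖W (x : L2)‖ = ‖(x : L2)‖ := by
    intro x
    obtain ⟨g, h, hg, hh, hx⟩ := U.exists_dec x.2
    rw [hx, Wmap_apply U V l hg hh, ← _root_.map_smul V.M l h]
    refine norm_eq_of_sq_eq (norm_nonneg _) (norm_nonneg _) ?_
    rw [V.norm_sq_M_add hg (Submodule.smul_mem _ _ hh), U.norm_sq_M_add hg hh,
      norm_smul, hl1, one_mul]
  -- inverses
  have hleft : ∀ x : U.KP, W' (W (x : L2)) = (x : L2) := by
    intro x
    obtain ⟨g, h, hg, hh, hx⟩ := U.exists_dec x.2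
    rw [hx, Wmap_apply U V l hg hh, ← _root_.map_smul V.M l h,
      Wmap_apply V U ((starRingEnd ℂ) l) hg (Submodule.smul_mem _ _ hh),
      ← _root_.map_smul U.M _ (l • h), smul_smul, hll, one_smul]
  have hright : ∀ y : V.KP, W (W' (y : L2)) = (y : L2) := by
    intro y
    obtain ⟨g, h, hg, hh, hy⟩ := V.exists_dec y.2
    rw [hy, Wmap_apply V U ((starRingEnd ℂ) l) hg hh, ← _root_.map_smul U.M _ h,
      Wmap_apply U V l hg (Submodule.smul_mem _ _ hh),
      ← _root_.map_smul V.M _ ((starRingEnd ℂ) l • h), smul_smul,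
      show l * (starRingEnd ℂ) l = 1 by rw [mul_comm]; exact hll, one_smul]
  -- build the equivalence
  refine ⟨{ toFun := fun x => ⟨W (x : L2), hWmem x⟩
            map_add' := fun x y => Subtype.ext (by push_cast; rw [map_add])
            map_smul' := fun c x => Subtype.ext (by push_cast; rw [_root_.map_smul]; rfl)
            invFun := fun y => ⟨W' (y : L2), hW'mem y⟩
            left_inv := fun x => Subtype.ext (hleft x)
            right_inv := fun y => Subtype.ext (hright y)
            norm_map' := fun x => hWnorm x }, ?_⟩
  intro f
  refine Subtype.ext ?_
  obtain ⟨g, h, hg, hh, hx⟩ := U.exists_dec f.2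
  set c := fourierBasis.repr g (-1) with hc
  -- LHS
  have hDuU := U.Du_apply_val hg hh f hx
  have hTTg : Mz g - c • oneL2 ∈ Hm := TT_mem_Hm hg
  have hh' : (c * (starRingEnd ℂ) U.a0) • oneL2 + Mz h ∈ H2 :=
    Submodule.add_mem _ (Submodule.smul_mem _ _ oneL2_mem_H2) (Mz_mem_H2 hh)
  -- RHS : value of Z f
  have hZf : (W (f : L2)) = g + V.M (l • h) := by
    rw [hx, Wmap_apply U V l hg hh, ← _root_.map_smul V.M l h]
  have hDuV := V.Du_apply_val hg (Submodule.smul_mem _ _ hh)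
    ⟨W (f : L2), hWmem f⟩ hZf
  show W ((U.Du f : U.KP) : L2) = ((V.Du ⟨W (f : L2), hWmem f⟩ : V.KP) : L2)
  rw [hDuU, hDuV, Wmap_apply U V l hTTg hh', ← _root_.map_smul V.M l]
  congr 1
  congr 1
  rw [smul_add, smul_smul, _root_.map_smul Mz l h]
  congr 2
  rw [← hl2]
  ring

/-- `D_u` and `D_v` are unitarily equivalent iff `|u(0)| = |v(0)|`. -/
theorem Du_unitary_equiv_iff (U V : InnerData) :
    (∃ Z : U.KP ≃ₗᵢ[ℂ] V.KP, ∀ f : U.KP, Z (U.Du f) = V.Du (Z f)) ↔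
      ‖U.a0‖ = ‖V.a0‖ := by
  constructor
  · rintro ⟨Z, hZ⟩
    have hsymm : ∀ y : V.KP, Z.symm (V.Du y) = U.Du (Z.symm y) := by
      intro y
      have h1 := hZ (Z.symm y)
      rw [Z.apply_symm_apply] at h1
      have h2 := congrArg Z.symm h1
      rw [Z.symm_apply_apply] at h2
      exact h2.symm
    obtain ⟨f, hf1, hf2⟩ := U.Du_attain
    obtain ⟨f', hf1', hf2'⟩ := V.Du_attain
    have hba : ‖V.a0‖ ≤ ‖U.a0‖ := by
      calc ‖V.a0‖ = ‖V.a0‖ * ‖Z f‖ := by rw [Z.norm_map, hf1, mul_one]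
        _ ≤ ‖V.Du (Z f)‖ := V.Du_norm_lower _
        _ = ‖Z (U.Du f)‖ := by rw [hZ f]
        _ = ‖U.Du f‖ := Z.norm_map _
        _ = ‖U.a0‖ := hf2
    have hab : ‖U.a0‖ ≤ ‖V.a0‖ := by
      calc ‖U.a0‖ = ‖U.a0‖ * ‖Z.symm f'‖ := by rw [Z.symm.norm_map, hf1', mul_one]
        _ ≤ ‖U.Du (Z.symm f')‖ := U.Du_norm_lower _
        _ = ‖Z.symm (V.Du f')‖ := by rw [hsymm f']
        _ = ‖V.Du f'‖ := Z.symm.norm_map _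
        _ = ‖V.a0‖ := hf2'
    linarith
  · exact exists_equiv U V

end MainProof

end Paper
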